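/- Let c₀ = (√3/3)[1,1,1], c₁ = (√2/2)[1,0,-1], c₂ = (√6/6)[1,-2,1] be the rows of the 3×3 DCT-II matrix. Then the 9 filters τ_{3i+j} = (1/3) c_iᵀ c_j for i,j ∈ {0,1,2} satisfy the partition of unity condition Σ_{κ=0}^8 |τ̂_κ(ξ)|² = 1 for all ξ ∈ ℝ². -/

import Mathlib

open scoped BigOperators

/-- The rows of the 3×3 DCT-II matrix. -/
noncomputable def dctRow : Fin 3 → Fin 3 → ℝ :=
  ![![Real.sqrt 3 / 3, Real.sqrt 3 / 3, Real.sqrt 3 / 3],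
    ![Real.sqrt 2 / 2, 0, -(Real.sqrt 2 / 2)],
    ![Real.sqrt 6 / 6, -2 * (Real.sqrt 6 / 6), Real.sqrt 6 / 6]]

/-- Fourier series of a filter supported on `{0,1,2}²`: `τ̂(ξ) = Σ_k τ(k) e^{-i k·ξ}`. -/
noncomputable def dctFourier (τ : Fin 3 → Fin 3 → ℝ) (ξ : ℝ × ℝ) : ℂ :=
  ∑ k₁ : Fin 3, ∑ k₂ : Fin 3,
    (τ k₁ k₂ : ℂ) * Complex.exp (-Complex.I * (((k₁ : ℕ) : ℝ) * ξ.1 + ((k₂ : ℕ) : ℝ) * ξ.2))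

noncomputable def dctF (i : Fin 3) (x : ℝ) : ℂ :=
  (dctRow i 0 : ℂ) + (dctRow i 1 : ℂ) * Complex.exp (-Complex.I * x)
    + (dctRow i 2 : ℂ) * Complex.exp (-Complex.I * x) ^ 2

lemma dctFourier_factor (i j : Fin 3) (ξ : ℝ × ℝ) :
    dctFourier (fun k l => (1 / 3) * dctRow i k * dctRow j l) ξ
      = (1/3 : ℂ) * dctF i ξ.1 * dctF j ξ.2 := by
  have hexp : ∀ k l : Fin 3,
      Complex.exp (-Complex.I * (((k : ℕ) : ℝ) * ξ.1 + ((l : ℕ) : ℝ) * ξ.2))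
        = Complex.exp (-Complex.I * ξ.1) ^ (k : ℕ) * Complex.exp (-Complex.I * ξ.2) ^ (l : ℕ) := by
    intro k l
    rw [← Complex.exp_nat_mul, ← Complex.exp_nat_mul, ← Complex.exp_add]
    push_cast
    ring_nf
  simp only [dctFourier, dctF, hexp, Fin.sum_univ_three, Fin.isValue, Fin.val_zero, Fin.val_one,
    Fin.val_two, pow_zero, pow_one]
  push_cast
  ring

lemma sum_normSq_dctF (x : ℝ) : ∑ i : Fin 3, ‖dctF i x‖ ^ 2 = 3 := by
  have h2 : Real.sqrt 2 ^ 2 = 2 := Real.sq_sqrt (by norm_num)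
  have h3 : Real.sqrt 3 ^ 2 = 3 := Real.sq_sqrt (by norm_num)
  have h6 : Real.sqrt 6 ^ 2 = 6 := Real.sq_sqrt (by norm_num)
  have hsc : Real.sin x ^ 2 + Real.cos x ^ 2 = 1 := Real.sin_sq_add_cos_sq x
  have he : Complex.exp (-Complex.I * x) = Complex.ofReal (Real.cos x) - Complex.ofReal (Real.sin x) * Complex.I := by
    rw [show (-Complex.I * x : ℂ) = ((-x : ℝ) : ℂ) * Complex.I by push_cast; ring,
      Complex.exp_mul_I, ← Complex.ofReal_cos, ← Complex.ofReal_sin]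
    push_cast [Real.cos_neg, Real.sin_neg]; ring
  simp only [dctF, he, Fin.sum_univ_three, dctRow]
  simp only [Matrix.cons_val_zero, Matrix.cons_val_one, Matrix.head_cons, Matrix.cons_val_two, Matrix.tail_cons]
  simp only [Complex.sq_norm]
  simp only [Complex.normSq_apply, Complex.add_re, Complex.add_im, Complex.mul_re, Complex.mul_im,
    Complex.sub_re, Complex.sub_im, Complex.ofReal_re, Complex.ofReal_im, Complex.I_re,
    Complex.I_im, Complex.neg_re, Complex.neg_im, Complex.ofReal_neg, pow_two]
  ring_nf
  rw [h2, h3, h6]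
  nlinarith [hsc, sq_nonneg (Real.sin x), sq_nonneg (Real.cos x), sq_nonneg (Real.sin x * Real.cos x), sq_nonneg (Real.sin x ^ 2 + Real.cos x ^ 2)]

/-- Partition of unity for the 9 DCT-based tight framelet filters
`τ_{3i+j} = (1/3) cᵢᵀ cⱼ`: `Σ_{κ=0}^8 |τ̂_κ(ξ)|² = 1` for all `ξ ∈ ℝ²`. -/
theorem dct_partition_of_unity :
    ∀ ξ : ℝ × ℝ,
      ∑ i : Fin 3, ∑ j : Fin 3,
        ‖dctFourier (fun k l => (1 / 3) * dctRow i k * dctRow j l) ξ‖ ^ 2 = 1 := by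
  intro ξ
  have key : ∀ i j : Fin 3,
      ‖dctFourier (fun k l => (1 / 3) * dctRow i k * dctRow j l) ξ‖ ^ 2
        = 1/9 * (‖dctF i ξ.1‖ ^ 2 * ‖dctF j ξ.2‖ ^ 2) := by
    intro i j
    rw [dctFourier_factor, norm_mul, norm_mul]
    norm_num [mul_pow]
    ring
  simp only [key, ← Finset.mul_sum, ← Finset.sum_mul, sum_normSq_dctF]
  norm_num
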